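/- For a finite linearly ordered set E and a bijection σ : {1,...,n} → E with smallest descent i_1, the values σ(1) < σ(2) < ... < σ(i_1) are in increasing order and the set {σ(1),...,σ(i_1)} equals E_{≤ max S(σ,i_1)} \ (S(σ,i_1) \ {max S(σ,i_1)}), where S(σ,i_1) = { σ(j) : j ≥ i_1, σ(j) ≤ σ(i_1) }. -/
import Mathlib


/-- `S(σ, i) = { σ l : l ≥ i, σ l ≤ σ i }` as a Finset. -/
def sSet {E : Type*} [LinearOrder E] {n : ℕ} (σ : Fin n → E) (i : Fin n) : Finset E :=
  Finset.image σ (Finset.univ.filter (fun l => i ≤ l ∧ σ l ≤ σ i))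

/-- If `i` is the smallest descent of a bijection `σ : Fin n → E`, then the values of
`σ` at positions `≤ i` are increasing, `σ i = max S(σ,i)`, and the set of these values
is `E_{≤ max S(σ,i)} \ (S(σ,i) \ {max S(σ,i)})`. -/
theorem stmt16 {E : Type*} [Fintype E] [LinearOrder E] {n : ℕ}
    (σ : Fin n → E) (hσ : Function.Bijective σ)
    (i : Fin n) (hi : (i : ℕ) + 1 < n) (hdi : σ ⟨(i : ℕ) + 1, hi⟩ < σ i)
    (hmin : ∀ l : Fin n, ∀ hl : (l : ℕ) + 1 < n, σ ⟨(l : ℕ) + 1, hl⟩ < σ l → i ≤ l) :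
    (∀ l l' : Fin n, l < l' → l' ≤ i → σ l < σ l') ∧
    (σ i ∈ sSet σ i ∧ ∀ x ∈ sSet σ i, x ≤ σ i) ∧
    Finset.image σ (Finset.univ.filter (fun l => l ≤ i))
      = (Finset.univ.filter (fun x => x ≤ σ i)) \ ((sSet σ i).erase (σ i)) := by
  have step : ∀ m : ℕ, ∀ hm1 : m + 1 < n, m + 1 ≤ (i : ℕ) →
      σ ⟨m, Nat.lt_of_succ_lt hm1⟩ < σ ⟨m + 1, hm1⟩ := by
    intro m hm1 hmi
    rcases lt_trichotomy (σ ⟨m, Nat.lt_of_succ_lt hm1⟩) (σ ⟨m + 1, hm1⟩) with h | h | h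
    · exact h
    · exact absurd (hσ.1 h) (by simp)
    · have h2 : (i : ℕ) ≤ m := hmin ⟨m, Nat.lt_of_succ_lt hm1⟩ hm1 h
      omega
  have key : ∀ m : ℕ, ∀ hm : m < n, m ≤ (i : ℕ) → ∀ l : Fin n, (l : ℕ) < m →
      σ l < σ ⟨m, hm⟩ := by
    intro m
    induction m with
    | zero => intro _ _ l hl; omega
    | succ m ih =>
      intro hm hmi l hl
      have hstep := step m hm hmi
      rcases Nat.lt_or_ge (l : ℕ) m with h | h
      · exact lt_trans (ih (Nat.lt_of_succ_lt hm) (by omega) l h) hstep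
      · have hle : l = ⟨m, Nat.lt_of_succ_lt hm⟩ := Fin.ext (by simp only [Fin.val_mk]; omega)
        rw [hle]; exact hstep
  have mono : ∀ l l' : Fin n, l < l' → l' ≤ i → σ l < σ l' := by
    intro l l' hll hli
    have := key (l' : ℕ) l'.isLt hli l hll
    simpa using this
  refine ⟨mono, ⟨?_, ?_⟩, ?_⟩
  · simp only [sSet, Finset.mem_image, Finset.mem_filter, Finset.mem_univ, true_and]
    exact ⟨i, ⟨le_refl i, le_refl _⟩, rfl⟩
  · intro x hx
    simp only [sSet, Finset.mem_image, Finset.mem_filter, Finset.mem_univ, true_and] at hx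
    obtain ⟨l, ⟨-, h⟩, rfl⟩ := hx
    exact h
  · ext x
    obtain ⟨l, rfl⟩ := hσ.2 x
    simp only [Finset.mem_image, Finset.mem_sdiff, Finset.mem_erase, Finset.mem_filter,
      Finset.mem_univ, true_and, sSet, ne_eq]
    constructor
    · rintro ⟨l', hl', h⟩
      have heql : l' = l := hσ.1 h
      subst heql
      have hσle : σ l' ≤ σ i := by
        rcases eq_or_lt_of_le hl' with h | h
        · rw [h]
        · exact le_of_lt (mono _ _ h le_rfl)
      refine ⟨hσle, ?_⟩
      rintro ⟨hne, l'', ⟨hil'', -⟩, heq⟩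
      have h3 : l'' = l' := hσ.1 heq
      subst h3
      exact hne (by rw [le_antisymm hl' hil''])
    · rintro ⟨hle, h⟩
      refine ⟨l, ?_, rfl⟩
      by_contra hc
      push_neg at hc
      exact h ⟨fun he => absurd (hσ.1 he) (by exact ne_of_gt hc), l, ⟨le_of_lt hc, hle⟩, rfl⟩
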